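/- Let v¹, v³ : [0,L] → ℂ be C² and v², v⁴, v⁵, v⁶ : [0,L] → ℂ be C¹, all six vanishing at x = 0 and x = L, and suppose S := k₃(∂ₓv⁵ − l·v¹) + d·(∂ₓv⁶ − l·v²) extends to a C¹ function on [0,L]. Then Re ∫₀^L [ k₁(∂ₓv² + v⁴ + l·v⁶)·conj(∂ₓv¹ + v³ + l·v⁵) + ( k₁·∂ₓ(∂ₓv¹ + v³ + l·v⁵) + l·k₃(∂ₓv⁵ − l·v¹) + l·d(x)(∂ₓv⁶ − l·v²) )·conj(v²) + k₂·∂ₓv⁴·conj(∂ₓv³) + ( k₂·∂ₓ²v³ − k₁(∂ₓv¹ + v³ + l·v⁵) )·conj(v⁴) + k₃(∂ₓv⁶ − l·v²)·conj(∂ₓv⁵ − l·v¹) + ( ∂ₓS − l·k₁(∂ₓv¹ + v³ + l·v⁵) )·conj(v⁶) ] dx = −d₀ ∫_α^β |∂ₓv⁶ − l·v²|² dx. (This is the dissipativity identity Re(𝒜U,U)_ℋ = −∫₀^L d(x)|v⁶_x − l v²|² dx for the Bresse generator 𝒜.) -/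

import Mathlib

open MeasureTheory Set intervalIntegral

private lemma bresse_aux_hasDerivAt {f : ℝ → ℂ} {L x : ℝ} {n : WithTop ℕ∞}
    (hf : ContDiffOn ℝ n f (Set.Icc 0 L)) (hn : 1 ≤ n) (hx : x ∈ Set.Ioo 0 L) :
    HasDerivAt f (derivWithin f (Set.Icc 0 L) x) x := by
  have hmem : Set.Icc 0 L ∈ nhds x := Icc_mem_nhds hx.1 hx.2
  have h := (((hf.of_le hn).differentiableOn one_ne_zero) x (Set.Ioo_subset_Icc_self hx)).differentiableAt hmem
  rw [derivWithin_of_mem_nhds hmem]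
  exact h.hasDerivAt

private lemma bresse_aux_deriv_eq {f : ℝ → ℂ} {L x : ℝ} (hx : x ∈ Set.Ioo 0 L) :
    deriv f x = derivWithin f (Set.Icc 0 L) x :=
  (derivWithin_of_mem_nhds (Icc_mem_nhds hx.1 hx.2)).symm


private lemma bresse_aux_ind_int {E : Type} [NormedAddCommGroup E] {L α β : ℝ}
    (hα : 0 ≤ α) (hβL : β ≤ L) {f : ℝ → E}
    (hf : ContinuousOn f (Set.Icc α β)) :
    IntervalIntegrable (Set.indicator (Set.Ioo α β) f) MeasureTheory.volume 0 L := by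
  by_cases hαβ : α ≤ β
  case neg => simp [Set.Ioo_eq_empty (by intro h; exact hαβ h.le)]
  rw [intervalIntegrable_iff_integrableOn_Ioc_of_le (le_trans hα (le_trans hαβ hβL))]
  have h1 : IntegrableOn f (Set.Icc α β) volume := hf.integrableOn_Icc
  have h2 : Integrable (Set.indicator (Set.Ioo α β) f) volume := by
    rw [integrable_indicator_iff measurableSet_Ioo]
    exact h1.mono_set Set.Ioo_subset_Icc_self
  exact h2.integrableOn

private lemma bresse_aux_ind_integral {E : Type} [NormedAddCommGroup E] [NormedSpace ℝ E]
    {L α β : ℝ} (hL : 0 ≤ L) (hα : 0 < α) (hβL : β < L) (hαβ : α ≤ β) (f : ℝ → E) :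
    ∫ x in (0:ℝ)..L, Set.indicator (Set.Ioo α β) f x = ∫ x in α..β, f x := by
  rw [intervalIntegral.integral_of_le hL, intervalIntegral.integral_of_le hαβ,
    MeasureTheory.setIntegral_indicator measurableSet_Ioo,
    Set.inter_eq_self_of_subset_right
      (show Set.Ioo α β ⊆ Set.Ioc 0 L from fun x hx => ⟨hα.trans hx.1, (hx.2.trans hβL).le⟩),
    ← MeasureTheory.integral_Ioc_eq_integral_Ioo]

theorem bresse_dissipativity_identity
    (ρ₁ ρ₂ k₁ k₂ k₃ l L d₀ α β : ℝ)
    (hρ₁ : 0 < ρ₁) (hρ₂ : 0 < ρ₂) (hk₁ : 0 < k₁) (hk₂ : 0 < k₂) (hk₃ : 0 < k₃)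
    (hl : 0 < l) (hL : 0 < L) (hd₀ : 0 < d₀)
    (hα : 0 < α) (hαβ : α < β) (hβL : β < L)
    (d : ℝ → ℝ) (hd : ∀ x, d x = if α < x ∧ x < β then d₀ else 0)
    (v1 v2 v3 v4 v5 v6 : ℝ → ℂ)
    (hv1 : ContDiffOn ℝ 2 v1 (Set.Icc 0 L)) (hv3 : ContDiffOn ℝ 2 v3 (Set.Icc 0 L))
    (hv2 : ContDiffOn ℝ 1 v2 (Set.Icc 0 L)) (hv4 : ContDiffOn ℝ 1 v4 (Set.Icc 0 L))
    (hv5 : ContDiffOn ℝ 1 v5 (Set.Icc 0 L)) (hv6 : ContDiffOn ℝ 1 v6 (Set.Icc 0 L))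
    (hbc : v1 0 = 0 ∧ v1 L = 0 ∧ v2 0 = 0 ∧ v2 L = 0 ∧ v3 0 = 0 ∧ v3 L = 0
      ∧ v4 0 = 0 ∧ v4 L = 0 ∧ v5 0 = 0 ∧ v5 L = 0 ∧ v6 0 = 0 ∧ v6 L = 0)
    (S : ℝ → ℂ) (hS : ContDiffOn ℝ 1 S (Set.Icc 0 L))
    (hSdef : ∀ x ∈ Set.Icc (0:ℝ) L,
      S x = (k₃ : ℂ) * (deriv v5 x - (l : ℂ) * v1 x)
        + (d x : ℂ) * (deriv v6 x - (l : ℂ) * v2 x)) :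
    (∫ x in (0:ℝ)..L,
      ((k₁ : ℂ) * (deriv v2 x + v4 x + (l : ℂ) * v6 x)
          * (starRingEnd ℂ) (deriv v1 x + v3 x + (l : ℂ) * v5 x)
        + ((k₁ : ℂ) * deriv (fun y => deriv v1 y + v3 y + (l : ℂ) * v5 y) x
            + (l : ℂ) * (k₃ : ℂ) * (deriv v5 x - (l : ℂ) * v1 x)
            + (l : ℂ) * (d x : ℂ) * (deriv v6 x - (l : ℂ) * v2 x))
          * (starRingEnd ℂ) (v2 x)
        + (k₂ : ℂ) * deriv v4 x * (starRingEnd ℂ) (deriv v3 x)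
        + ((k₂ : ℂ) * deriv (deriv v3) x
            - (k₁ : ℂ) * (deriv v1 x + v3 x + (l : ℂ) * v5 x)) * (starRingEnd ℂ) (v4 x)
        + (k₃ : ℂ) * (deriv v6 x - (l : ℂ) * v2 x)
          * (starRingEnd ℂ) (deriv v5 x - (l : ℂ) * v1 x)
        + (deriv S x - (l : ℂ) * (k₁ : ℂ) * (deriv v1 x + v3 x + (l : ℂ) * v5 x))
          * (starRingEnd ℂ) (v6 x))).re
    = -d₀ * ∫ x in α..β, ‖deriv v6 x - (l : ℂ) * v2 x‖ ^ 2 := by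
  obtain ⟨h10, h1L, h20, h2L, h30, h3L, h40, h4L, h50, h5L, h60, h6L⟩ := hbc
  have hJu : UniqueDiffOn ℝ (Set.Icc (0:ℝ) L) := uniqueDiffOn_Icc hL
  set w1 := derivWithin v1 (Set.Icc (0:ℝ) L) with hw1
  set w2 := derivWithin v2 (Set.Icc (0:ℝ) L) with hw2
  set w3 := derivWithin v3 (Set.Icc (0:ℝ) L) with hw3
  set w4 := derivWithin v4 (Set.Icc (0:ℝ) L) with hw4
  set w5 := derivWithin v5 (Set.Icc (0:ℝ) L) with hw5
  set w6 := derivWithin v6 (Set.Icc (0:ℝ) L) with hw6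
  set wS := derivWithin S (Set.Icc (0:ℝ) L) with hwS
  set w1' := derivWithin w1 (Set.Icc (0:ℝ) L) with hw1'
  set w3' := derivWithin w3 (Set.Icc (0:ℝ) L) with hw3'
  -- smoothness of the within-derivatives
  have hw1s : ContDiffOn ℝ 1 w1 (Set.Icc (0:ℝ) L) := hv1.derivWithin hJu (by norm_num)
  have hw3s : ContDiffOn ℝ 1 w3 (Set.Icc (0:ℝ) L) := hv3.derivWithin hJu (by norm_num)
  have cw1 : ContinuousOn w1 (Set.Icc (0:ℝ) L) := hw1s.continuousOn
  have cw3 : ContinuousOn w3 (Set.Icc (0:ℝ) L) := hw3s.continuousOn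
  have cw1' : ContinuousOn w1' (Set.Icc (0:ℝ) L) :=
    (hw1s.derivWithin (m := 0) hJu (by norm_num)).continuousOn
  have cw3' : ContinuousOn w3' (Set.Icc (0:ℝ) L) :=
    (hw3s.derivWithin (m := 0) hJu (by norm_num)).continuousOn
  have cw2 : ContinuousOn w2 (Set.Icc (0:ℝ) L) :=
    (hv2.derivWithin (m := 0) hJu (by norm_num)).continuousOn
  have cw4 : ContinuousOn w4 (Set.Icc (0:ℝ) L) :=
    (hv4.derivWithin (m := 0) hJu (by norm_num)).continuousOn
  have cw5 : ContinuousOn w5 (Set.Icc (0:ℝ) L) :=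
    (hv5.derivWithin (m := 0) hJu (by norm_num)).continuousOn
  have cw6 : ContinuousOn w6 (Set.Icc (0:ℝ) L) :=
    (hv6.derivWithin (m := 0) hJu (by norm_num)).continuousOn
  have cwS : ContinuousOn wS (Set.Icc (0:ℝ) L) :=
    (hS.derivWithin (m := 0) hJu (by norm_num)).continuousOn
  have cv1 : ContinuousOn v1 (Set.Icc (0:ℝ) L) := hv1.continuousOn
  have cv2 : ContinuousOn v2 (Set.Icc (0:ℝ) L) := hv2.continuousOn
  have cv3 : ContinuousOn v3 (Set.Icc (0:ℝ) L) := hv3.continuousOn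
  have cv4 : ContinuousOn v4 (Set.Icc (0:ℝ) L) := hv4.continuousOn
  have cv5 : ContinuousOn v5 (Set.Icc (0:ℝ) L) := hv5.continuousOn
  have cv6 : ContinuousOn v6 (Set.Icc (0:ℝ) L) := hv6.continuousOn
  have cS : ContinuousOn S (Set.Icc (0:ℝ) L) := hS.continuousOn
  -- interior derivatives
  have hdav1 : ∀ x ∈ Set.Ioo (0:ℝ) L, HasDerivAt v1 (w1 x) x :=
    fun x hx => bresse_aux_hasDerivAt hv1 (by norm_num) hx
  have hdav2 : ∀ x ∈ Set.Ioo (0:ℝ) L, HasDerivAt v2 (w2 x) x :=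
    fun x hx => bresse_aux_hasDerivAt hv2 (by norm_num) hx
  have hdav3 : ∀ x ∈ Set.Ioo (0:ℝ) L, HasDerivAt v3 (w3 x) x :=
    fun x hx => bresse_aux_hasDerivAt hv3 (by norm_num) hx
  have hdav4 : ∀ x ∈ Set.Ioo (0:ℝ) L, HasDerivAt v4 (w4 x) x :=
    fun x hx => bresse_aux_hasDerivAt hv4 (by norm_num) hx
  have hdav5 : ∀ x ∈ Set.Ioo (0:ℝ) L, HasDerivAt v5 (w5 x) x :=
    fun x hx => bresse_aux_hasDerivAt hv5 (by norm_num) hx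
  have hdav6 : ∀ x ∈ Set.Ioo (0:ℝ) L, HasDerivAt v6 (w6 x) x :=
    fun x hx => bresse_aux_hasDerivAt hv6 (by norm_num) hx
  have hdaS : ∀ x ∈ Set.Ioo (0:ℝ) L, HasDerivAt S (wS x) x :=
    fun x hx => bresse_aux_hasDerivAt hS (by norm_num) hx
  have hdaw1 : ∀ x ∈ Set.Ioo (0:ℝ) L, HasDerivAt w1 (w1' x) x :=
    fun x hx => bresse_aux_hasDerivAt hw1s (by norm_num) hx
  have hdaw3 : ∀ x ∈ Set.Ioo (0:ℝ) L, HasDerivAt w3 (w3' x) x :=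
    fun x hx => bresse_aux_hasDerivAt hw3s (by norm_num) hx
  -- the auxiliary functions
  set A : ℝ → ℂ := fun y => w1 y + v3 y + (l : ℂ) * v5 y with hA
  set A' : ℝ → ℂ := fun y => w1' y + w3 y + (l : ℂ) * w5 y with hA'
  set Dd : ℝ → ℂ := fun y => w6 y - (l : ℂ) * v2 y with hDd
  have hdaA : ∀ x ∈ Set.Ioo (0:ℝ) L, HasDerivAt A (A' x) x := fun x hx =>
    ((hdaw1 x hx).add (hdav3 x hx)).add ((hdav5 x hx).const_mul (l : ℂ))
  -- rewriting the global derivatives in the interior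
  have hd2v3 : ∀ x ∈ Set.Ioo (0:ℝ) L, deriv (deriv v3) x = w3' x := by
    intro x hx
    have he : deriv v3 =ᶠ[nhds x] w3 := by
      filter_upwards [Ioo_mem_nhds hx.1 hx.2] with y hy
      exact bresse_aux_deriv_eq hy
    rw [he.deriv_eq, bresse_aux_deriv_eq hx]
  have hd2A : ∀ x ∈ Set.Ioo (0:ℝ) L,
      deriv (fun y => deriv v1 y + v3 y + (l : ℂ) * v5 y) x = A' x := by
    intro x hx
    have he : (fun y => deriv v1 y + v3 y + (l : ℂ) * v5 y) =ᶠ[nhds x] A := by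
      filter_upwards [Ioo_mem_nhds hx.1 hx.2] with y hy
      rw [bresse_aux_deriv_eq (f := v1) hy]
    rw [he.deriv_eq]
    exact (hdaA x hx).deriv
  -- the potential function G and its derivative G'
  set G : ℝ → ℂ := fun y => (k₁ : ℂ) * v2 y * (starRingEnd ℂ) (A y)
      + (k₂ : ℂ) * v4 y * (starRingEnd ℂ) (w3 y) + S y * (starRingEnd ℂ) (v6 y) with hG
  set G' : ℝ → ℂ := fun y =>
      ((k₁ : ℂ) * w2 y * (starRingEnd ℂ) (A y) + (k₁ : ℂ) * v2 y * (starRingEnd ℂ) (A' y))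
      + ((k₂ : ℂ) * w4 y * (starRingEnd ℂ) (w3 y) + (k₂ : ℂ) * v4 y * (starRingEnd ℂ) (w3' y))
      + (wS y * (starRingEnd ℂ) (v6 y) + S y * (starRingEnd ℂ) (w6 y)) with hG'
  have hdaG : ∀ x ∈ Set.Ioo (0:ℝ) L, HasDerivAt G (G' x) x := by
    intro x hx
    have h1 := (((hdav2 x hx).const_mul (k₁ : ℂ)).mul ((hdaA x hx).star))
    have h2 := (((hdav4 x hx).const_mul (k₂ : ℂ)).mul ((hdaw3 x hx).star))
    have h3 := ((hdaS x hx).mul ((hdav6 x hx).star))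
    have h := (h1.add h2).add h3
    convert h using 1
    all_goals rfl
  have cA : ContinuousOn A (Set.Icc (0:ℝ) L) := by rw [hA]; fun_prop
  have cA' : ContinuousOn A' (Set.Icc (0:ℝ) L) := by rw [hA']; fun_prop
  have cDd : ContinuousOn Dd (Set.Icc (0:ℝ) L) := by rw [hDd]; fun_prop
  have hGc : ContinuousOn G (Set.Icc (0:ℝ) L) := by rw [hG]; simp only [← Complex.star_def]; fun_prop
  have hG'c : ContinuousOn G' (Set.Icc (0:ℝ) L) := by rw [hG']; simp only [← Complex.star_def]; fun_prop
  -- boundary values of G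
  have hG0 : G 0 = 0 := by rw [hG]; simp [h20, h40, h60]
  have hGL : G L = 0 := by rw [hG]; simp [h2L, h4L, h6L]
  have hgc : ContinuousOn (fun y => (G y).re) (Set.Icc (0:ℝ) L) :=
    Complex.continuous_re.comp_continuousOn hGc
  have hhint : IntervalIntegrable (fun y => (G' y).re) volume 0 L := by
    apply ContinuousOn.intervalIntegrable
    rw [Set.uIcc_of_le hL.le]
    exact Complex.continuous_re.comp_continuousOn hG'c
  have hdag : ∀ x ∈ Set.Ioo (0:ℝ) L, HasDerivAt (fun y => (G y).re) ((G' x).re) x := by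
    intro x hx
    have := Complex.reCLM.hasFDerivAt.comp_hasDerivAt x (hdaG x hx)
    exact this
  have hFTC : ∫ x in (0:ℝ)..L, (G' x).re = 0 := by
    rw [intervalIntegral.integral_eq_sub_of_hasDerivAt_of_le hL.le hgc hdag hhint]
    simp [hG0, hGL]
  -- the integrand
  set Fd : ℝ → ℂ := fun y => (l : ℂ) * (d₀ : ℂ) * Dd y * (starRingEnd ℂ) (v2 y) with hFd
  set Fc : ℝ → ℂ := fun y =>
      (k₁ : ℂ) * (w2 y + v4 y + (l : ℂ) * v6 y) * (starRingEnd ℂ) (A y)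
      + ((k₁ : ℂ) * A' y + (l : ℂ) * (k₃ : ℂ) * (w5 y - (l : ℂ) * v1 y)) * (starRingEnd ℂ) (v2 y)
      + (k₂ : ℂ) * w4 y * (starRingEnd ℂ) (w3 y)
      + ((k₂ : ℂ) * w3' y - (k₁ : ℂ) * A y) * (starRingEnd ℂ) (v4 y)
      + (k₃ : ℂ) * Dd y * (starRingEnd ℂ) (w5 y - (l : ℂ) * v1 y)
      + (wS y - (l : ℂ) * (k₁ : ℂ) * A y) * (starRingEnd ℂ) (v6 y) with hFc
  set F : ℝ → ℂ := fun x =>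
      ((k₁ : ℂ) * (deriv v2 x + v4 x + (l : ℂ) * v6 x)
          * (starRingEnd ℂ) (deriv v1 x + v3 x + (l : ℂ) * v5 x)
        + ((k₁ : ℂ) * deriv (fun y => deriv v1 y + v3 y + (l : ℂ) * v5 y) x
            + (l : ℂ) * (k₃ : ℂ) * (deriv v5 x - (l : ℂ) * v1 x)
            + (l : ℂ) * (d x : ℂ) * (deriv v6 x - (l : ℂ) * v2 x))
          * (starRingEnd ℂ) (v2 x)
        + (k₂ : ℂ) * deriv v4 x * (starRingEnd ℂ) (deriv v3 x)
        + ((k₂ : ℂ) * deriv (deriv v3) x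
            - (k₁ : ℂ) * (deriv v1 x + v3 x + (l : ℂ) * v5 x)) * (starRingEnd ℂ) (v4 x)
        + (k₃ : ℂ) * (deriv v6 x - (l : ℂ) * v2 x)
          * (starRingEnd ℂ) (deriv v5 x - (l : ℂ) * v1 x)
        + (deriv S x - (l : ℂ) * (k₁ : ℂ) * (deriv v1 x + v3 x + (l : ℂ) * v5 x))
          * (starRingEnd ℂ) (v6 x)) with hF
  have hFeqc : ∀ x ∈ Set.Ioo (0:ℝ) L, F x = Fc x + Set.indicator (Set.Ioo α β) Fd x := by
    intro x hx
    have hind : Set.indicator (Set.Ioo α β) Fd x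
        = (l : ℂ) * (d x : ℂ) * Dd x * (starRingEnd ℂ) (v2 x) := by
      rw [hd x]
      by_cases hc : α < x ∧ x < β
      · rw [Set.indicator_of_mem (show x ∈ Set.Ioo α β from hc), if_pos hc, hFd]
      · rw [Set.indicator_of_notMem (by simpa [Set.mem_Ioo] using hc), if_neg hc]
        simp
    rw [hind]
    simp only [hF, hFc]
    rw [bresse_aux_deriv_eq (f := v2) hx, bresse_aux_deriv_eq (f := v1) hx,
      bresse_aux_deriv_eq (f := v5) hx, bresse_aux_deriv_eq (f := v6) hx,
      bresse_aux_deriv_eq (f := v4) hx, bresse_aux_deriv_eq (f := v3) hx,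
      bresse_aux_deriv_eq (f := S) hx, hd2v3 x hx, hd2A x hx]
    simp only [hA, hA', hDd, hw1, hw2, hw3, hw4, hw5, hw6, hwS, hw1', hw3']
    ring
  have cFc : ContinuousOn Fc (Set.Icc (0:ℝ) L) := by
    rw [hFc]; simp only [← Complex.star_def]; fun_prop
  have cFd : ContinuousOn Fd (Set.Icc α β) := by
    have hsub : Set.Icc α β ⊆ Set.Icc (0:ℝ) L := Set.Icc_subset_Icc hα.le hβL.le
    have : ContinuousOn Fd (Set.Icc (0:ℝ) L) := by
      rw [hFd]; simp only [← Complex.star_def]; fun_prop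
    exact this.mono hsub
  have hFcint : IntervalIntegrable Fc volume 0 L :=
    (by rw [Set.uIcc_of_le hL.le]; exact cFc : ContinuousOn Fc (Set.uIcc 0 L)).intervalIntegrable
  have hFdint : IntervalIntegrable (Set.indicator (Set.Ioo α β) Fd) volume 0 L :=
    bresse_aux_ind_int hα.le hβL.le cFd
  have haeL : ∀ᵐ x : ℝ, x ≠ L := by
    refine MeasureTheory.ae_iff.mpr ?_
    simp only [ne_eq, not_not, Set.setOf_eq_eq_singleton]
    exact measure_singleton L
  have hFint : IntervalIntegrable F volume 0 L := by
    apply (hFcint.add hFdint).congr_ae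
    filter_upwards [ae_restrict_mem measurableSet_uIoc, ae_restrict_of_ae haeL] with x h1 h2
    rw [Set.uIoc_of_le hL.le] at h1
    exact (hFeqc x ⟨h1.1, lt_of_le_of_ne h1.2 h2⟩).symm
  -- the dissipation term
  set m : ℝ → ℝ := Set.indicator (Set.Ioo α β) (fun y => d₀ * ‖Dd y‖ ^ 2) with hm
  have cmd : ContinuousOn (fun y => d₀ * ‖Dd y‖ ^ 2) (Set.Icc α β) := by
    have hsub : Set.Icc α β ⊆ Set.Icc (0:ℝ) L := Set.Icc_subset_Icc hα.le hβL.le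
    have : ContinuousOn (fun y => d₀ * ‖Dd y‖ ^ 2) (Set.Icc (0:ℝ) L) := by fun_prop
    exact this.mono hsub
  have hmint : IntervalIntegrable m volume 0 L := bresse_aux_ind_int hα.le hβL.le cmd
  -- the key pointwise identity
  have hkey : ∀ x ∈ Set.Ioo (0:ℝ) L, (F x).re = (G' x).re - m x := by
    intro x hx
    have hmx : m x = d x * ‖Dd x‖ ^ 2 := by
      rw [hm, hd x]
      by_cases hc : α < x ∧ x < β
      · rw [Set.indicator_of_mem (show x ∈ Set.Ioo α β from hc), if_pos hc]
      · rw [Set.indicator_of_notMem (by simpa [Set.mem_Ioo] using hc), if_neg hc, zero_mul]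
    have hSx : S x = (k₃ : ℂ) * (w5 x - (l : ℂ) * v1 x) + ((d x : ℝ) : ℂ) * Dd x := by
      rw [hSdef x (Set.Ioo_subset_Icc_self hx), bresse_aux_deriv_eq (f := v5) hx,
        bresse_aux_deriv_eq (f := v6) hx]
    rw [hmx]
    simp only [hF, hG']
    rw [bresse_aux_deriv_eq (f := v2) hx, bresse_aux_deriv_eq (f := v1) hx,
      bresse_aux_deriv_eq (f := v5) hx, bresse_aux_deriv_eq (f := v6) hx,
      bresse_aux_deriv_eq (f := v4) hx, bresse_aux_deriv_eq (f := v3) hx,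
      bresse_aux_deriv_eq (f := S) hx, hd2v3 x hx, hd2A x hx, hSx]
    simp only [hA, hA', hDd, hw1, hw2, hw3, hw4, hw5, hw6, hwS, hw1', hw3']
    rw [Complex.sq_norm]
    simp only [Complex.add_re, Complex.sub_re, Complex.mul_re, Complex.add_im, Complex.sub_im,
      Complex.mul_im, Complex.conj_re, Complex.conj_im, Complex.ofReal_re, Complex.ofReal_im,
      Complex.normSq_apply]
    ring
  -- assembling everything
  have hre : ∫ x in (0:ℝ)..L, (F x).re = (∫ x in (0:ℝ)..L, F x).re := by
    simpa using Complex.reCLM.intervalIntegral_comp_comm hFint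
  rw [← hre]
  have h1 : ∫ x in (0:ℝ)..L, (F x).re = ∫ x in (0:ℝ)..L, ((G' x).re - m x) := by
    apply intervalIntegral.integral_congr_ae
    filter_upwards [haeL] with x hne hmem
    rw [Set.uIoc_of_le hL.le] at hmem
    exact hkey x ⟨hmem.1, lt_of_le_of_ne hmem.2 hne⟩
  rw [h1, intervalIntegral.integral_sub hhint hmint, hFTC]
  have h2 : ∫ x in (0:ℝ)..L, m x
      = d₀ * ∫ x in α..β, ‖deriv v6 x - (l : ℂ) * v2 x‖ ^ 2 := by
    rw [hm, bresse_aux_ind_integral hL.le hα hβL hαβ.le, ← intervalIntegral.integral_const_mul]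
    apply intervalIntegral.integral_congr
    intro x hx
    rw [Set.uIcc_of_le hαβ.le] at hx
    have hx2 : x ∈ Set.Ioo (0:ℝ) L := ⟨hα.trans_le hx.1, lt_of_le_of_lt hx.2 hβL⟩
    simp only [hDd, hw6]
    rw [bresse_aux_deriv_eq (f := v6) hx2]
  rw [h2]
  ring
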